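/- Let H be a complex Hilbert space, T : H → H a bounded operator, and {e_j}_{j=1}^N a pairwise orthogonal family with ⟨e_j, e_j⟩ = λ_j ≥ 0. Let δ ≥ 0, C > 0, ε > 0 and suppose that for every u ∈ H there exists t ∈ ℂᴺ with ‖T u − Σ_{j=1}^N t_j e_j‖ ≤ δ‖u‖ and ‖t‖_{ℓ²} ≤ C‖T u‖. Let π be the orthogonal projection onto the span of {e_j : λ_j > ε²/C²}. Then ‖(1 − π) T‖ ≤ δ + ε‖T‖. -/

import Mathlib

/-- Approximation lemma: if every `T u` is `δ‖u‖`-approximated by combinations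
`Σ t_j e_j` of a pairwise orthogonal family with `⟨e_j, e_j⟩ = λ_j` and
`‖t‖_{ℓ²} ≤ C‖T u‖`, and `π` is the orthogonal projection onto the span of those
`e_j` with `λ_j > ε²/C²`, then `‖(1 − π) T‖ ≤ δ + ε‖T‖`. -/
theorem stmt_16
    {H : Type*} [NormedAddCommGroup H] [InnerProductSpace ℂ H] [CompleteSpace H]
    {N : ℕ} (e : Fin N → H) (lam : Fin N → ℝ)
    (horth : ∀ i j, i ≠ j → (inner ℂ (e i) (e j) : ℂ) = 0)
    (hnorm : ∀ j, (inner ℂ (e j) (e j) : ℂ) = (lam j : ℂ))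
    (hlam : ∀ j, 0 ≤ lam j)
    (T : H →L[ℂ] H)
    (δ C ε : ℝ) (hδ : 0 ≤ δ) (hC : 0 < C) (hε : 0 < ε)
    (happrox : ∀ u : H, ∃ t : Fin N → ℂ,
      ‖T u - ∑ j, t j • e j‖ ≤ δ * ‖u‖ ∧
      Real.sqrt (∑ j, ‖t j‖ ^ 2) ≤ C * ‖T u‖)
    (π : H →L[ℂ] H)
    (hπ : ∀ u : H,
      π u ∈ Submodule.span ℂ (e '' {j | ε ^ 2 / C ^ 2 < lam j}) ∧
      u - π u ∈ (Submodule.span ℂ (e '' {j | ε ^ 2 / C ^ 2 < lam j}))ᗮ) :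
    ‖(ContinuousLinearMap.id ℂ H - π).comp T‖ ≤ δ + ε * ‖T‖ := by
  have hT : (0:ℝ) ≤ ‖T‖ := norm_nonneg _
  apply ContinuousLinearMap.opNorm_le_bound _ (by positivity)
  intro u
  obtain ⟨t, h1, h2⟩ := happrox u
  set K := Submodule.span ℂ (e '' {j | ε ^ 2 / C ^ 2 < lam j}) with hK
  set s : Finset (Fin N) := Finset.univ.filter (fun j => ε ^ 2 / C ^ 2 < lam j) with hs
  set w : H := ∑ j ∈ s, t j • e j with hw
  have hwK : w ∈ K := by
    apply Submodule.sum_mem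
    intro j hj
    exact Submodule.smul_mem _ _ (Submodule.subset_span ⟨j, by
      simpa [hs] using (Finset.mem_filter.mp hj).2, rfl⟩)
  -- norm of orthogonal sums
  have key : ∀ (r : Finset (Fin N)), ‖∑ j ∈ r, t j • e j‖ ^ 2 = ∑ j ∈ r, ‖t j‖ ^ 2 * lam j := by
    intro r
    have : (inner ℂ (∑ j ∈ r, t j • e j) (∑ j ∈ r, t j • e j) : ℂ)
        = ∑ j ∈ r, ((‖t j‖ ^ 2 * lam j : ℝ) : ℂ) := by
      rw [sum_inner]
      refine Finset.sum_congr rfl fun i hi => ?_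
      rw [inner_sum, Finset.sum_eq_single i]
      · rw [inner_smul_left, inner_smul_right, hnorm, ← mul_assoc,
          mul_comm ((starRingEnd ℂ) (t i)) (t i), Complex.mul_conj]
        push_cast [Complex.normSq_eq_norm_sq]
        ring
      · intro j hj hij
        rw [inner_smul_left, inner_smul_right, horth i j (Ne.symm hij)]
        ring
      · intro h; exact absurd hi h
    rw [← @inner_self_eq_norm_sq ℂ, this]
    simp [Complex.re_sum, ← Complex.ofReal_pow]
  -- the small part
  have hsmall : ‖∑ j ∈ sᶜ, t j • e j‖ ≤ ε * ‖T u‖ := by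
    have hb : ‖∑ j ∈ sᶜ, t j • e j‖ ^ 2 ≤ ε ^ 2 * ‖T u‖ ^ 2 := by
      rw [key]
      have hsum : (∑ j, ‖t j‖ ^ 2) ≤ (C * ‖T u‖) ^ 2 := by
        have := Real.sqrt_le_sqrt (Real.sq_sqrt (by positivity : (0:ℝ) ≤ ∑ j, ‖t j‖ ^ 2)).symm.le
        calc (∑ j, ‖t j‖ ^ 2) = Real.sqrt (∑ j, ‖t j‖ ^ 2) ^ 2 := by
              rw [Real.sq_sqrt (by positivity)]
          _ ≤ (C * ‖T u‖) ^ 2 := by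
              apply pow_le_pow_left₀ (Real.sqrt_nonneg _) h2
      calc ∑ j ∈ sᶜ, ‖t j‖ ^ 2 * lam j
          ≤ ∑ j ∈ sᶜ, ‖t j‖ ^ 2 * (ε ^ 2 / C ^ 2) := by
            apply Finset.sum_le_sum
            intro j hj
            have : ¬ (ε ^ 2 / C ^ 2 < lam j) := by
              simpa [hs] using (Finset.mem_compl.mp hj)
            exact mul_le_mul_of_nonneg_left (not_lt.mp this) (by positivity)
        _ = (ε ^ 2 / C ^ 2) * ∑ j ∈ sᶜ, ‖t j‖ ^ 2 := by rw [← Finset.sum_mul, mul_comm]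
        _ ≤ (ε ^ 2 / C ^ 2) * ∑ j, ‖t j‖ ^ 2 := by
            apply mul_le_mul_of_nonneg_left _ (by positivity)
            exact Finset.sum_le_sum_of_subset_of_nonneg (Finset.subset_univ _)
              (fun j _ _ => by positivity)
        _ ≤ (ε ^ 2 / C ^ 2) * (C * ‖T u‖) ^ 2 := by
            exact mul_le_mul_of_nonneg_left hsum (by positivity)
        _ = ε ^ 2 * ‖T u‖ ^ 2 := by field_simp
    have := Real.sqrt_le_sqrt hb
    rwa [Real.sqrt_sq (norm_nonneg _), show ε ^ 2 * ‖T u‖ ^ 2 = (ε * ‖T u‖) ^ 2 by ring,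
      Real.sqrt_sq (by positivity)] at this
  -- projection bound: ‖Tu - π(Tu)‖ ≤ ‖Tu - w‖
  have hproj : ‖T u - π (T u)‖ ≤ ‖T u - w‖ := by
    obtain ⟨hmem, hperp⟩ := hπ (T u)
    have hb : π (T u) - w ∈ K := Submodule.sub_mem _ hmem hwK
    have hinner : (inner ℂ (T u - π (T u)) (π (T u) - w) : ℂ) = 0 := by
      exact (Submodule.mem_orthogonal' _ _).mp hperp _ hb
    have heq : T u - w = (T u - π (T u)) + (π (T u) - w) := by abel
    have := norm_add_sq_eq_norm_sq_add_norm_sq_of_inner_eq_zero _ _ hinner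
    rw [← heq] at this
    nlinarith [norm_nonneg (π (T u) - w), norm_nonneg (T u - w), norm_nonneg (T u - π (T u))]
  -- assemble
  have hsplit : T u - w = (T u - ∑ j, t j • e j) + ∑ j ∈ sᶜ, t j • e j := by
    rw [hw, ← Finset.sum_add_sum_compl s (fun j => t j • e j)]
    abel
  calc ‖((ContinuousLinearMap.id ℂ H - π).comp T) u‖ = ‖T u - π (T u)‖ := by
        simp [ContinuousLinearMap.sub_apply]
    _ ≤ ‖T u - w‖ := hproj
    _ ≤ ‖T u - ∑ j, t j • e j‖ + ‖∑ j ∈ sᶜ, t j • e j‖ := by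
        rw [hsplit]; exact norm_add_le _ _
    _ ≤ δ * ‖u‖ + ε * ‖T u‖ := add_le_add h1 hsmall
    _ ≤ δ * ‖u‖ + ε * (‖T‖ * ‖u‖) := by
        have := T.le_opNorm u
        nlinarith
    _ = (δ + ε * ‖T‖) * ‖u‖ := by ring
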